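/- arXiv:0807.2318 — 2 statements merged into one kernel-verified Lean document; each statement's English description precedes it below -/
import Mathlib

section
/- Let M be sufficient, B a complementary basis with dictionary D = −A_B^{-1} A_N, and let i,j ∈ B be distinct such that B′ = B\{i,j} ∪ {ī, j̄} is a basis. Then dim(𝒞(B\{i}) ∩ 𝒞(B′)) = n−1 if and only if D_{i,ī} = 0 and D_{j,ī} < 0. -/
open Matrix

/-- `M` is column sufficient. -/
def ColSuff {n : ℕ} (M : Matrix (Fin n) (Fin n) ℝ) : Prop :=
  ∀ z : Fin n → ℝ, (∀ i, z i * M.mulVec z i ≤ 0) → ∀ i, z i * M.mulVec z i = 0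

/-- `M` is sufficient: both `M` and `Mᵀ` are column sufficient. -/
def Suff {n : ℕ} (M : Matrix (Fin n) (Fin n) ℝ) : Prop := ColSuff M ∧ ColSuff Mᵀ

/-- The matrix `A = [I, -M]`, with columns indexed by `Fin n ⊕ Fin n`. -/
def Amat {n : ℕ} (M : Matrix (Fin n) (Fin n) ℝ) : Matrix (Fin n) (Fin n ⊕ Fin n) ℝ :=
  Matrix.fromCols 1 (-M)

/-- The complementary index. -/
def bar {n : ℕ} : Fin n ⊕ Fin n → Fin n ⊕ Fin n
  | .inl i => .inr i
  | .inr i => .inl i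

/-- `B` is a basis of `A = [I, -M]`: `n` linearly independent columns. -/
def IsBasis {n : ℕ} (M : Matrix (Fin n) (Fin n) ℝ) (B : Finset (Fin n ⊕ Fin n)) : Prop :=
  B.card = n ∧ LinearIndependent ℝ (fun j : B => (Amat M)ᵀ (j : Fin n ⊕ Fin n))

/-- A complementary basis: a basis containing exactly one of each complementary pair. -/
def IsComplBasis {n : ℕ} (M : Matrix (Fin n) (Fin n) ℝ) (B : Finset (Fin n ⊕ Fin n)) : Prop :=
  IsBasis M B ∧ ∀ i : Fin n, Xor' (Sum.inl i ∈ B) (Sum.inr i ∈ B)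

/-- The complementary cone `𝒞(J)`: nonnegative combinations of the columns of `A` indexed by `J`. -/
def coneOf {n : ℕ} (M : Matrix (Fin n) (Fin n) ℝ) (J : Finset (Fin n ⊕ Fin n)) :
    Set (Fin n → ℝ) :=
  {y | ∃ c : Fin n ⊕ Fin n → ℝ, (∀ j, 0 ≤ c j) ∧ (∀ j ∉ J, c j = 0) ∧ y = (Amat M).mulVec c}

lemma bar_bar {n : ℕ} (x : Fin n ⊕ Fin n) : bar (bar x) = x := by cases x <;> rfl

lemma bar_injective {n : ℕ} : Function.Injective (bar (n := n)) := fun x y h => by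
  rw [← bar_bar x, h, bar_bar]

def dotL {n : ℕ} (v : Fin n → ℝ) : (Fin n → ℝ) →ₗ[ℝ] ℝ where
  toFun w := v ⬝ᵥ w
  map_add' x y := dotProduct_add v x y
  map_smul' c x := dotProduct_smul c v x

@[simp] lemma dotL_apply {n : ℕ} (v w : Fin n → ℝ) : dotL v w = v ⬝ᵥ w := rfl

lemma mulVec_eq_sum {n : ℕ} (M : Matrix (Fin n) (Fin n) ℝ) (c : Fin n ⊕ Fin n → ℝ) :
    (Amat M).mulVec c = ∑ l : Fin n ⊕ Fin n, c l • (Amat M)ᵀ l := by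
  funext m
  simp only [Matrix.mulVec, dotProduct, Finset.sum_apply, Pi.smul_apply,
    Matrix.transpose_apply, smul_eq_mul]
  exact Finset.sum_congr rfl fun l _ => mul_comm _ _

lemma Amat_mulVec {n : ℕ} (M : Matrix (Fin n) (Fin n) ℝ) (w : Fin n ⊕ Fin n → ℝ) (m : Fin n) :
    (Amat M).mulVec w m = w (Sum.inl m) - M.mulVec (fun k => w (Sum.inr k)) m := by
  simp [Amat, Matrix.mulVec, dotProduct, Fintype.sum_sum_type, Matrix.fromCols,
    Matrix.one_apply, ite_mul, sub_eq_add_neg]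

lemma amulVec_single {n : ℕ} (M : Matrix (Fin n) (Fin n) ℝ) (k : Fin n ⊕ Fin n) :
    (Amat M).mulVec (fun l => if l = k then (1:ℝ) else 0) = (Amat M)ᵀ k := by
  rw [mulVec_eq_sum]
  rw [Finset.sum_eq_single k]
  · simp
  · intro l _ hlk; simp [hlk]
  · simp

set_option maxHeartbeats 3200000 in
theorem stmt_7 {n : ℕ} (M : Matrix (Fin n) (Fin n) ℝ) (hM : Suff M)
    (B : Finset (Fin n ⊕ Fin n)) (hB : IsComplBasis M B)
    (β : (Fin n ⊕ Fin n) → (Fin n → ℝ))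
    -- β consists of the rows of A_B⁻¹ (indexed by B): β k ⬝ (column l of A) = δ_{k l} for k, l ∈ B
    (hβ : ∀ k ∈ B, ∀ l ∈ B, β k ⬝ᵥ (Amat M)ᵀ l = if k = l then 1 else 0)
    (i j : Fin n ⊕ Fin n) (hi : i ∈ B) (hj : j ∈ B) (hij : i ≠ j)
    (hB' : IsBasis M (insert (bar i) (insert (bar j) ((B.erase i).erase j)))) :
    Module.finrank ℝ (vectorSpan ℝ
        (coneOf M (B.erase i) ∩
          coneOf M (insert (bar i) (insert (bar j) ((B.erase i).erase j))))) = n - 1 ↔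
      (-(β i ⬝ᵥ (Amat M)ᵀ (bar i)) = 0 ∧ -(β j ⬝ᵥ (Amat M)ᵀ (bar i)) < 0) := by
  classical
  obtain ⟨⟨hcard, hind⟩, hxor⟩ := hB
  -- basic index facts
  have hbar_notin : ∀ k ∈ B, bar k ∉ B := by
    intro k hk
    cases k with
    | inl m => rcases hxor m with ⟨h1, h2⟩ | ⟨h1, h2⟩ <;> simp_all [bar]
    | inr m => rcases hxor m with ⟨h1, h2⟩ | ⟨h1, h2⟩ <;> simp_all [bar]
  have hbi : bar i ∉ B := hbar_notin i hi
  have hbj : bar j ∉ B := hbar_notin j hj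
  have hbij : bar i ≠ bar j := fun h => hij (bar_injective h)
  have hibj : i ≠ bar j := fun h => hbj (h ▸ hi)
  have hjbi : j ≠ bar i := fun h => hbi (h ▸ hj)
  have hibi : i ≠ bar i := by cases i <;> simp [bar]
  have hjbj : j ≠ bar j := by cases j <;> simp [bar]
  have hn2 : 2 ≤ n := by
    have : 1 < B.card := Finset.one_lt_card.2 ⟨i, hi, j, hj, hij⟩
    omega
  set T : Finset (Fin n ⊕ Fin n) := (B.erase i).erase j with hT
  have hjBe : j ∈ B.erase i := Finset.mem_erase.2 ⟨fun h => hij h.symm, hj⟩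
  have hTcard : T.card = n - 2 := by
    rw [hT, Finset.card_erase_of_mem hjBe, Finset.card_erase_of_mem hi, hcard]
    omega
  have hTsub : T ⊆ B := fun k hk =>
    Finset.mem_of_mem_erase (Finset.mem_of_mem_erase hk)
  have hTne : ∀ k ∈ T, k ≠ i ∧ k ≠ j := by
    intro k hk
    exact ⟨(Finset.mem_erase.1 (Finset.mem_of_mem_erase hk)).1, (Finset.mem_erase.1 hk).1⟩
  -- span of the basis columns
  have hfinV : Module.finrank ℝ (Fin n → ℝ) = n := Module.finrank_fin_fun ℝ
  have hspan : Submodule.span ℝ (Set.range fun k : B => (Amat M)ᵀ (k : Fin n ⊕ Fin n)) = ⊤ := by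
    apply hind.span_eq_top_of_card_eq_finrank'
    simp [hcard, hfinV]
  -- expansion in the basis
  have hexp : ∀ y : Fin n → ℝ, ∑ k ∈ B, (β k ⬝ᵥ y) • (Amat M)ᵀ k = y := by
    set φ : (Fin n → ℝ) →ₗ[ℝ] (Fin n → ℝ) :=
      { toFun := fun y => ∑ k ∈ B, (β k ⬝ᵥ y) • (Amat M)ᵀ k
        map_add' := by
          intro x y
          rw [← Finset.sum_add_distrib]
          exact Finset.sum_congr rfl fun k _ => by rw [dotProduct_add, add_smul]
        map_smul' := by
          intro r x
          rw [RingHom.id_apply, Finset.smul_sum]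
          exact Finset.sum_congr rfl fun k _ => by
            rw [dotProduct_smul, smul_eq_mul, mul_smul] } with hphi
    have hid : φ = LinearMap.id := by
      apply LinearMap.ext_on hspan
      intro x hx
      obtain ⟨k, rfl⟩ := hx
      show ∑ k' ∈ B, (β k' ⬝ᵥ (Amat M)ᵀ (k : Fin n ⊕ Fin n)) • (Amat M)ᵀ k' =
        (Amat M)ᵀ (k : Fin n ⊕ Fin n)
      rw [Finset.sum_eq_single_of_mem (k : Fin n ⊕ Fin n) k.2]
      · rw [hβ _ k.2 _ k.2, if_pos rfl, one_smul]
      · intro b hb hbk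
        rw [hβ b hb _ k.2, if_neg hbk, zero_smul]
    intro y
    have := DFunLike.congr_fun hid y
    simpa [hphi] using this
  -- dot with mulVec
  have hdot : ∀ (k : Fin n ⊕ Fin n) (c : Fin n ⊕ Fin n → ℝ),
      β k ⬝ᵥ (Amat M).mulVec c = ∑ l : Fin n ⊕ Fin n, c l * (β k ⬝ᵥ (Amat M)ᵀ l) := by
    intro k c
    rw [_root_.mulVec_eq_sum]
    have : β k ⬝ᵥ (∑ l : Fin n ⊕ Fin n, c l • (Amat M)ᵀ l) =
        dotL (β k) (∑ l : Fin n ⊕ Fin n, c l • (Amat M)ᵀ l) := rfl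
    rw [this, map_sum]
    exact Finset.sum_congr rfl fun l _ => by rw [_root_.map_smul, dotL_apply, smul_eq_mul]
  -- coefficient extraction, support in B
  have hextract : ∀ c : Fin n ⊕ Fin n → ℝ, (∀ l, l ∉ B → c l = 0) →
      ∀ k ∈ B, β k ⬝ᵥ (Amat M).mulVec c = c k := by
    intro c hc k hk
    rw [hdot]
    rw [Finset.sum_eq_single k]
    · rw [hβ k hk k hk, if_pos rfl, mul_one]
    · intro l _ hlk
      by_cases hlB : l ∈ B
      · rw [hβ k hk l hlB, if_neg fun h => hlk h.symm, mul_zero]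
      · rw [hc l hlB, zero_mul]
    · intro h; exact absurd (Finset.mem_univ k) h
  -- coefficient extraction, support in B ∪ {bar i, bar j}
  have hextract3 : ∀ c : Fin n ⊕ Fin n → ℝ,
      (∀ l, l ∉ B → l ≠ bar i → l ≠ bar j → c l = 0) →
      ∀ k ∈ B, β k ⬝ᵥ (Amat M).mulVec c =
        c k + c (bar i) * (β k ⬝ᵥ (Amat M)ᵀ (bar i)) + c (bar j) * (β k ⬝ᵥ (Amat M)ᵀ (bar j)) := by
    intro c hc k hk
    rw [hdot]
    have hki : k ≠ bar i := fun h => hbi (h ▸ hk)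
    have hkj : k ≠ bar j := fun h => hbj (h ▸ hk)
    have hvan : ∀ l ∈ (Finset.univ : Finset (Fin n ⊕ Fin n)),
        l ∉ ({k, bar i, bar j} : Finset (Fin n ⊕ Fin n)) →
        c l * (β k ⬝ᵥ (Amat M)ᵀ l) = 0 := by
      intro l _ hl
      simp only [Finset.mem_insert, Finset.mem_singleton, not_or] at hl
      obtain ⟨hlk, hlbi, hlbj⟩ := hl
      by_cases hlB : l ∈ B
      · rw [hβ k hk l hlB, if_neg fun h => hlk h.symm, mul_zero]
      · rw [hc l hlB hlbi hlbj, zero_mul]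
    rw [← Finset.sum_subset (Finset.subset_univ ({k, bar i, bar j} : Finset (Fin n ⊕ Fin n))) hvan]
    rw [Finset.sum_insert (by simp [hki, hkj]), Finset.sum_insert (by simp [hbij]),
      Finset.sum_singleton, hβ k hk k hk, if_pos rfl, mul_one]
    ring
  -- kernel form of column sufficiency
  have hker : ∀ w : Fin n ⊕ Fin n → ℝ, (Amat M).mulVec w = 0 →
      (∀ m, w (Sum.inl m) * w (Sum.inr m) ≤ 0) → ∀ m, w (Sum.inl m) * w (Sum.inr m) = 0 := by
    intro w hw hle m
    have hz : ∀ m', M.mulVec (fun m'' => w (Sum.inr m'')) m' = w (Sum.inl m') := by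
      intro m'
      have h0 := congrFun hw m'
      rw [Amat_mulVec] at h0
      simp only [Pi.zero_apply] at h0
      linarith
    have h1 := hM.1 (fun m'' => w (Sum.inr m''))
      (fun m' => by rw [hz m', mul_comm]; exact hle m') m
    rw [hz m, mul_comm] at h1
    exact h1
  -- master sufficiency lemma
  have hmaster : ∀ γ : Fin n ⊕ Fin n → ℝ, (∀ l ∈ B, γ l = 0) →
      (∀ k ∈ B, 0 ≤ (β k ⬝ᵥ (Amat M).mulVec γ) * γ (bar k)) →
      ∀ k ∈ B, (β k ⬝ᵥ (Amat M).mulVec γ) * γ (bar k) = 0 := by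
    intro γ hγ hge
    set z := (Amat M).mulVec γ with hzdef
    set w : Fin n ⊕ Fin n → ℝ := fun l => if l ∈ B then -(β l ⬝ᵥ z) else γ l with hwdef
    have hwB : ∀ l ∈ B, w l = -(β l ⬝ᵥ z) := fun l hl => if_pos hl
    have hwN : ∀ l, l ∉ B → w l = γ l := fun l hl => if_neg hl
    have hwker : (Amat M).mulVec w = 0 := by
      rw [_root_.mulVec_eq_sum, ← Finset.sum_add_sum_compl B]
      have e1 : ∑ l ∈ B, w l • (Amat M)ᵀ l = -z := by
        have : ∑ l ∈ B, w l • (Amat M)ᵀ l = ∑ l ∈ B, -((β l ⬝ᵥ z) • (Amat M)ᵀ l) :=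
          Finset.sum_congr rfl fun l hl => by rw [hwB l hl, neg_smul]
        rw [this, Finset.sum_neg_distrib, hexp z]
      have e2 : ∑ l ∈ Bᶜ, w l • (Amat M)ᵀ l = z := by
        have e21 : ∑ l ∈ Bᶜ, w l • (Amat M)ᵀ l = ∑ l ∈ Bᶜ, γ l • (Amat M)ᵀ l :=
          Finset.sum_congr rfl fun l hl => by rw [hwN l (Finset.mem_compl.1 hl)]
        have e22 : ∑ l ∈ B, γ l • (Amat M)ᵀ l = 0 :=
          Finset.sum_eq_zero fun l hl => by rw [hγ l hl, zero_smul]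
        have e23 := Finset.sum_add_sum_compl B (fun l => γ l • (Amat M)ᵀ l)
        rw [e22, zero_add] at e23
        rw [e21, e23, ← _root_.mulVec_eq_sum]
      rw [e1, e2, neg_add_cancel]
    have hprods := hker w hwker ?_
    · intro k hk
      cases k with
      | inl m =>
        have hin : Sum.inr m ∉ B := by
          rcases hxor m with ⟨h1, h2⟩ | ⟨h1, h2⟩
          · exact h2
          · exact absurd hk h2
        have h0 := hprods m
        rw [hwB _ hk, hwN _ hin, neg_mul] at h0
        have : bar (Sum.inl m) = Sum.inr m := rfl
        rw [this]
        exact neg_eq_zero.mp h0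
      | inr m =>
        have hin : Sum.inl m ∉ B := by
          rcases hxor m with ⟨h1, h2⟩ | ⟨h1, h2⟩
          · exact absurd hk h2
          · exact h2
        have h0 := hprods m
        rw [hwB _ hk, hwN _ hin, mul_neg] at h0
        have : bar (Sum.inr m) = Sum.inl m := rfl
        rw [this, mul_comm]
        exact neg_eq_zero.mp h0
    · intro m
      rcases hxor m with ⟨h1, h2⟩ | ⟨h1, h2⟩
      · rw [hwB _ h1, hwN _ h2, neg_mul]
        exact neg_nonpos.2 (hge _ h1)
      · rw [hwB _ h1, hwN _ h2, mul_neg]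
        refine neg_nonpos.2 ?_
        rw [mul_comm]
        exact hge _ h1
  -- diagonal nonpositivity
  have hdiag : ∀ k ∈ B, β k ⬝ᵥ (Amat M)ᵀ (bar k) ≤ 0 := by
    intro k hk
    by_contra hpos
    push_neg at hpos
    set γ : Fin n ⊕ Fin n → ℝ := fun l => if l = bar k then 1 else 0 with hgam
    have hγB : ∀ l ∈ B, γ l = 0 := fun l hl =>
      if_neg fun h => hbar_notin k hk (by rw [← h]; exact hl)
    have hz : (Amat M).mulVec γ = (Amat M)ᵀ (bar k) := amulVec_single M (bar k)
    have hbk : γ (bar k) = 1 := if_pos rfl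
    have hge : ∀ k' ∈ B, 0 ≤ (β k' ⬝ᵥ (Amat M).mulVec γ) * γ (bar k') := by
      intro k' hk'
      by_cases h : k' = k
      · subst h; rw [hz, hbk, mul_one]; exact le_of_lt hpos
      · have h0 : γ (bar k') = 0 := if_neg fun hb => h (bar_injective hb)
        rw [h0, mul_zero]
    have h0 := hmaster γ hγB hge k hk
    rw [hz, hbk, mul_one] at h0
    exact absurd h0 (ne_of_gt hpos)
  set B' : Finset (Fin n ⊕ Fin n) := insert (bar i) (insert (bar j) T) with hB'def
  set S : Set (Fin n → ℝ) := coneOf M (B.erase i) ∩ coneOf M B' with hS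
  obtain ⟨da, hda_def⟩ : ∃ x : ℝ, x = β i ⬝ᵥ (Amat M)ᵀ (bar i) := ⟨_, rfl⟩
  obtain ⟨db, hdb_def⟩ : ∃ x : ℝ, x = β i ⬝ᵥ (Amat M)ᵀ (bar j) := ⟨_, rfl⟩
  obtain ⟨dc, hdc_def⟩ : ∃ x : ℝ, x = β j ⬝ᵥ (Amat M)ᵀ (bar i) := ⟨_, rfl⟩
  obtain ⟨dd, hdd_def⟩ : ∃ x : ℝ, x = β j ⬝ᵥ (Amat M)ᵀ (bar j) := ⟨_, rfl⟩
  -- membership facts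
  have hzeroS : (0 : Fin n → ℝ) ∈ S := by
    constructor <;>
      exact ⟨0, fun _ => le_refl 0, fun _ _ => rfl, by rw [Matrix.mulVec_zero]⟩
  have hSi : ∀ y ∈ coneOf M (B.erase i), β i ⬝ᵥ y = 0 := by
    rintro y ⟨c, hc0, hcs, rfl⟩
    have hcB : ∀ l, l ∉ B → c l = 0 := fun l hl =>
      hcs l fun h => hl (Finset.mem_of_mem_erase h)
    rw [hextract c hcB i hi]
    exact hcs i (Finset.notMem_erase i B)
  have hcolS : ∀ k ∈ T, (Amat M)ᵀ k ∈ S := by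
    intro k hk
    have hkBe : k ∈ B.erase i := Finset.mem_of_mem_erase hk
    have hkB' : k ∈ B' := Finset.mem_insert_of_mem (Finset.mem_insert_of_mem hk)
    have hnn : ∀ l : Fin n ⊕ Fin n, (0:ℝ) ≤ if l = k then 1 else 0 := by
      intro l; split <;> norm_num
    constructor
    · exact ⟨fun l => if l = k then 1 else 0, hnn,
        fun l hl => if_neg fun h => hl (by rw [h]; exact hkBe), (amulVec_single M k).symm⟩
    · exact ⟨fun l => if l = k then 1 else 0, hnn,
        fun l hl => if_neg fun h => hl (by rw [h]; exact hkB'), (amulVec_single M k).symm⟩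
  have hkeri : Module.finrank ℝ (LinearMap.ker (dotL (β i))) = n - 1 := by
    have hr := LinearMap.finrank_range_add_finrank_ker (dotL (β i))
    have hrange : LinearMap.range (dotL (β i)) = ⊤ := by
      rw [LinearMap.range_eq_top]
      intro r
      refine ⟨r • (Amat M)ᵀ i, ?_⟩
      rw [_root_.map_smul, dotL_apply, hβ i hi i hi, if_pos rfl, smul_eq_mul, mul_one]
    rw [hrange, finrank_top, Module.finrank_self, hfinV] at hr
    omega
  have hWi : vectorSpan ℝ S ≤ LinearMap.ker (dotL (β i)) := by
    rw [vectorSpan_def, Submodule.span_le]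
    rintro v hv
    obtain ⟨y1, hy1, y2, hy2, rfl⟩ := Set.mem_vsub.1 hv
    rw [SetLike.mem_coe, LinearMap.mem_ker, vsub_eq_sub, map_sub, dotL_apply, dotL_apply,
      hSi y1 hy1.1, hSi y2 hy2.1, sub_zero]
  have key1 : Module.finrank ℝ (vectorSpan ℝ S) = n - 1 ↔ ∃ y ∈ S, β j ⬝ᵥ y ≠ 0 := by
    constructor
    · intro hrk
      by_contra hE
      push_neg at hE
      have hWj : vectorSpan ℝ S ≤ LinearMap.ker (dotL (β j)) := by
        rw [vectorSpan_def, Submodule.span_le]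
        rintro v hv
        obtain ⟨y1, hy1, y2, hy2, rfl⟩ := Set.mem_vsub.1 hv
        rw [SetLike.mem_coe, LinearMap.mem_ker, vsub_eq_sub, map_sub, dotL_apply, dotL_apply,
          hE y1 hy1, hE y2 hy2, sub_zero]
      have heq : vectorSpan ℝ S = LinearMap.ker (dotL (β i)) :=
        Submodule.eq_of_le_of_finrank_eq hWi (by rw [hrk, hkeri])
      have hcolj : (Amat M)ᵀ j ∈ LinearMap.ker (dotL (β i)) := by
        rw [LinearMap.mem_ker, dotL_apply, hβ i hi j hj, if_neg hij]
      rw [← heq] at hcolj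
      have hc2 := hWj hcolj
      rw [LinearMap.mem_ker, dotL_apply, hβ j hj j hj, if_pos rfl] at hc2
      exact one_ne_zero hc2
    · rintro ⟨y, hyS, hyj⟩
      refine le_antisymm ?_ ?_
      · exact (Submodule.finrank_mono hWi).trans_eq hkeri
      · set u : ({x // x ∈ T} ⊕ Unit) → (Fin n → ℝ) :=
          Sum.elim (fun k => (Amat M)ᵀ (k : Fin n ⊕ Fin n)) (fun _ => y) with hu
        have hbcol : ∀ (k' : Fin n ⊕ Fin n), k' ∈ B → ∀ (k : {x // x ∈ T}), k' ≠ (k : Fin n ⊕ Fin n) →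
            β k' ⬝ᵥ (Amat M)ᵀ (k : Fin n ⊕ Fin n) = 0 := by
          intro k' hk' k hne
          rw [hβ k' hk' _ (hTsub k.2), if_neg hne]
        have huind : LinearIndependent ℝ u := by
          rw [Fintype.linearIndependent_iff]
          intro g hg
          rw [Fintype.sum_sum_type] at hg
          simp only [hu, Sum.elim_inl, Sum.elim_inr, Finset.univ_unique, Finset.sum_singleton] at hg
          have happ : ∀ v : Fin n → ℝ,
              (∑ k : {x // x ∈ T}, g (Sum.inl k) * (v ⬝ᵥ (Amat M)ᵀ (k : Fin n ⊕ Fin n))) +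
                g (Sum.inr ()) * (v ⬝ᵥ y) = 0 := by
            intro v
            have h0 := congrArg (dotL v) hg
            rw [map_zero, map_add, map_sum] at h0
            simpa only [_root_.map_smul, dotL_apply, smul_eq_mul] using h0
          have hinr : g (Sum.inr ()) = 0 := by
            have h0 := happ (β j)
            have hz : ∀ k : {x // x ∈ T},
                g (Sum.inl k) * (β j ⬝ᵥ (Amat M)ᵀ (k : Fin n ⊕ Fin n)) = 0 := by
              intro k
              rw [hβ j hj _ (hTsub k.2),
                if_neg (fun h : j = (k : Fin n ⊕ Fin n) => (hTne _ k.2).2 h.symm), mul_zero]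
            rw [Finset.sum_eq_zero (fun k _ => hz k), zero_add] at h0
            exact (mul_eq_zero.1 h0).resolve_right hyj
          intro x
          cases x with
          | inr u => cases u; exact hinr
          | inl k =>
            have h0 := happ (β (k : Fin n ⊕ Fin n))
            have hkB := hTsub k.2
            rw [Finset.sum_eq_single k] at h0
            · rw [hβ _ hkB _ hkB, if_pos rfl, mul_one, hinr, zero_mul, add_zero] at h0
              exact h0
            · intro k' _ hk'
              rw [hβ _ hkB _ (hTsub k'.2), if_neg, mul_zero]
              exact fun h => hk' (Subtype.ext h.symm)
            · intro h; exact absurd (Finset.mem_univ k) h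
        have hsub : Submodule.span ℝ (Set.range u) ≤ vectorSpan ℝ S := by
          rw [Submodule.span_le]
          rintro v ⟨x, rfl⟩
          have hvS : u x ∈ S := by
            cases x with
            | inl k => exact hcolS k k.2
            | inr _ => exact hyS
          have hv := vsub_mem_vectorSpan ℝ hvS hzeroS
          rwa [vsub_eq_sub, sub_zero] at hv
        have hle := Submodule.finrank_mono hsub
        rw [finrank_span_eq_card huind] at hle
        have hcardu : Fintype.card ({x // x ∈ T} ⊕ Unit) = n - 1 := by
          simp only [Fintype.card_sum, Fintype.card_coe, Fintype.card_unit, hTcard]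
          omega
        rw [hcardu] at hle
        exact hle
  have hdaneg : da ≤ 0 := by rw [hda_def]; exact hdiag i hi
  have hddneg : dd ≤ 0 := by rw [hdd_def]; exact hdiag j hj
  have hiT : i ∉ T := fun h => (hTne i h).1 rfl
  have hjT : j ∉ T := fun h => (hTne j h).2 rfl
  have key2 : (∃ y ∈ S, β j ⬝ᵥ y ≠ 0) ↔ (da = 0 ∧ 0 < dc) := by
    constructor
    · rintro ⟨y, ⟨hy1, hy2⟩, hyj⟩
      obtain ⟨c, hc0, hcs, hyc⟩ := hy1
      have hcsB : ∀ l, l ∉ B → c l = 0 := fun l hl =>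
        hcs l fun h => hl (Finset.mem_of_mem_erase h)
      have hβiy : β i ⬝ᵥ y = 0 := by
        rw [hyc, hextract c hcsB i hi]
        exact hcs i (Finset.notMem_erase i B)
      have hβjy : β j ⬝ᵥ y = c j := by rw [hyc, hextract c hcsB j hj]
      have ht : 0 < β j ⬝ᵥ y := by
        rcases lt_or_eq_of_le (hβjy ▸ hc0 j : (0:ℝ) ≤ β j ⬝ᵥ y) with h | h
        · exact h
        · exact absurd h.symm hyj
      obtain ⟨c', hc'0, hc's, hyc'⟩ := hy2
      have hc'supp : ∀ l, l ∉ B → l ≠ bar i → l ≠ bar j → c' l = 0 := by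
        intro l hlB hl1 hl2
        apply hc's
        rw [hB'def]
        simp only [Finset.mem_insert, not_or]
        exact ⟨hl1, hl2, fun h => hlB (hTsub h)⟩
      have hc'i : c' i = 0 := by
        apply hc's
        rw [hB'def]
        simp only [Finset.mem_insert, not_or]
        exact ⟨hibi, hibj, hiT⟩
      have hc'j : c' j = 0 := by
        apply hc's
        rw [hB'def]
        simp only [Finset.mem_insert, not_or]
        exact ⟨hjbi, hjbj, hjT⟩
      have h1 : c' (bar i) * da + c' (bar j) * db = 0 := by
        have h0 := hextract3 c' hc'supp i hi
        rw [← hyc', hβiy, hc'i, ← hda_def, ← hdb_def] at h0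
        linarith
      have h2 : c' (bar i) * dc + c' (bar j) * dd = β j ⬝ᵥ y := by
        have h0 := hextract3 c' hc'supp j hj
        rw [← hyc', hc'j, ← hdc_def, ← hdd_def] at h0
        linarith
      have hu0 : 0 ≤ c' (bar i) := hc'0 _
      have hv0 : 0 ≤ c' (bar j) := hc'0 _
      have hudc : 0 < c' (bar i) * dc := by
        have hvd : c' (bar j) * dd ≤ 0 := mul_nonpos_of_nonneg_of_nonpos hv0 hddneg
        linarith
      have hdc0 : 0 < dc := by
        rcases lt_or_ge 0 dc with h | h
        · exact h
        · have := mul_nonpos_of_nonneg_of_nonpos hu0 h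
          linarith
      have hupos : 0 < c' (bar i) := by
        rcases lt_or_ge 0 (c' (bar i)) with h | h
        · exact h
        · exfalso
          have h0 : c' (bar i) = 0 := le_antisymm h hu0
          rw [h0, zero_mul] at hudc
          exact lt_irrefl 0 hudc
      refine ⟨?_, hdc0⟩
      by_contra hda0ne
      have hda' : da < 0 := lt_of_le_of_ne hdaneg hda0ne
      have hvb : 0 < c' (bar j) * db := by
        have h4 : c' (bar i) * da < 0 := mul_neg_of_pos_of_neg hupos hda'
        linarith
      have hvpos : 0 < c' (bar j) := by
        rcases lt_or_ge 0 (c' (bar j)) with h | h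
        · exact h
        · exfalso
          have h0 : c' (bar j) = 0 := le_antisymm h hv0
          rw [h0, zero_mul] at hvb
          exact lt_irrefl 0 hvb
      have hdbpos : 0 < db := by
        rcases lt_or_ge 0 db with h | h
        · exact h
        · exfalso
          have := mul_nonpos_of_nonneg_of_nonpos hvpos.le h
          linarith
      have h3 : 0 < (c' (bar i) * dc + c' (bar j) * dd) * db := by
        rw [h2]; exact mul_pos ht hdbpos
      have h1d : (c' (bar i) * da + c' (bar j) * db) * dd = 0 := by rw [h1, zero_mul]
      have hdet : da * dd < db * dc := by nlinarith [h3, h1d, hupos]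
      obtain ⟨t', hP1, hP2⟩ : ∃ t' : ℝ, 0 < da + t' * db ∧ 0 ≤ (dc + t' * dd) * t' := by
        have hbne : db ≠ 0 := ne_of_gt hdbpos
        rcases eq_or_lt_of_le hddneg with hdd0 | hdd'
        · refine ⟨(1 - da) / db, ?_, ?_⟩
          · have he : da + (1 - da) / db * db = 1 := by
              rw [div_mul_cancel₀ _ hbne]; ring
            rw [he]; norm_num
          · rw [hdd0, mul_zero, add_zero]
            have htp : 0 ≤ (1 - da) / db := div_nonneg (by linarith) hdbpos.le
            exact mul_nonneg hdc0.le htp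
        · have hne : -dd ≠ 0 := ne_of_gt (by linarith)
          refine ⟨dc / (-dd), ?_, ?_⟩
          · have he : da + dc / (-dd) * db = (db * dc - da * dd) / (-dd) := by
              have hdne : dd ≠ 0 := by intro h; rw [h] at hdd'; exact lt_irrefl 0 hdd'
              field_simp
              ring
            rw [he]
            exact div_pos (by linarith) (by linarith)
          · have he : dc + dc / (-dd) * dd = 0 := by
              have h5 : dc / (-dd) * dd = -(dc / (-dd) * (-dd)) := by ring
              rw [h5, div_mul_cancel₀ _ hne]
              ring
            rw [he, zero_mul]
      obtain ⟨γ, hgam⟩ : ∃ γ : Fin n ⊕ Fin n → ℝ,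
          γ = fun l => if l = bar i then 1 else if l = bar j then t' else 0 := ⟨_, rfl⟩
      have hγB : ∀ l ∈ B, γ l = 0 := by
        intro l hl
        simp only [hgam]
        rw [if_neg fun h => hbi (by rw [← h]; exact hl),
          if_neg fun h => hbj (by rw [← h]; exact hl)]
      have hγbi : γ (bar i) = 1 := by simp [hgam]
      have hγbj : γ (bar j) = t' := by simp [hgam, Ne.symm hbij]
      have hz : (Amat M).mulVec γ = (Amat M)ᵀ (bar i) + t' • (Amat M)ᵀ (bar j) := by
        have hsplit : γ = (fun l => if l = bar i then (1:ℝ) else 0) +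
            t' • (fun l => if l = bar j then (1:ℝ) else 0) := by
          funext l
          simp only [hgam, Pi.add_apply, Pi.smul_apply, smul_eq_mul]
          by_cases h1' : l = bar i
          · rw [if_pos h1', if_pos h1', if_neg (by rw [h1']; exact hbij), mul_zero, add_zero]
          · rw [if_neg h1', if_neg h1']
            by_cases h2' : l = bar j
            · rw [if_pos h2', if_pos h2', mul_one, zero_add]
            · rw [if_neg h2', if_neg h2', mul_zero, add_zero]
        rw [hsplit, Matrix.mulVec_add, Matrix.mulVec_smul, amulVec_single, amulVec_single]
      have hβiz : β i ⬝ᵥ (Amat M).mulVec γ = da + t' * db := by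
        rw [hz, dotProduct_add, dotProduct_smul, smul_eq_mul, ← hda_def, ← hdb_def]
      have hβjz : β j ⬝ᵥ (Amat M).mulVec γ = dc + t' * dd := by
        rw [hz, dotProduct_add, dotProduct_smul, smul_eq_mul, ← hdc_def, ← hdd_def]
      have hge : ∀ k ∈ B, 0 ≤ (β k ⬝ᵥ (Amat M).mulVec γ) * γ (bar k) := by
        intro k hk
        by_cases hki : k = i
        · subst hki; rw [hβiz, hγbi, mul_one]; exact hP1.le
        · by_cases hkj : k = j
          · subst hkj; rw [hβjz, hγbj]; exact hP2
          · have h0 : γ (bar k) = 0 := by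
              rw [hgam]; dsimp only
              rw [if_neg fun h => hki (bar_injective h), if_neg fun h => hkj (bar_injective h)]
            rw [h0, mul_zero]
      have h0 := hmaster γ hγB hge i hi
      rw [hβiz, hγbi, mul_one] at h0
      linarith
    · rintro ⟨hda0, hdc0⟩
      obtain ⟨c'', hcdd⟩ : ∃ c'' : Fin n ⊕ Fin n → ℝ,
          c'' = fun l => if l = bar i then 1
            else if l ∈ T then max 0 (-(β l ⬝ᵥ (Amat M)ᵀ (bar i))) else 0 := ⟨_, rfl⟩
      have hc''0 : ∀ l, 0 ≤ c'' l := by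
        intro l; simp only [hcdd]
        split
        · norm_num
        · split
          · exact le_max_left 0 _
          · exact le_refl 0
      have hc''bi : c'' (bar i) = 1 := by simp [hcdd]
      have hc''bj : c'' (bar j) = 0 := by
        simp only [hcdd]
        rw [if_neg (Ne.symm hbij), if_neg fun h => hbj (hTsub h)]
      have hc''supp3 : ∀ l, l ∉ B → l ≠ bar i → l ≠ bar j → c'' l = 0 := by
        intro l hlB hl1 _
        simp only [hcdd]
        rw [if_neg hl1, if_neg fun h => hlB (hTsub h)]
      obtain ⟨y, hydef⟩ : ∃ y : Fin n → ℝ, y = (Amat M).mulVec c'' := ⟨_, rfl⟩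
      have hyk : ∀ k ∈ B, β k ⬝ᵥ y = c'' k + (β k ⬝ᵥ (Amat M)ᵀ (bar i)) := by
        intro k hk
        rw [hydef, hextract3 c'' hc''supp3 k hk, hc''bi, hc''bj, one_mul, zero_mul, add_zero]
      have hc''i : c'' i = 0 := by
        simp only [hcdd]
        rw [if_neg hibi, if_neg hiT]
      have hc''j : c'' j = 0 := by
        simp only [hcdd]
        rw [if_neg hjbi, if_neg hjT]
      have hβiy : β i ⬝ᵥ y = 0 := by
        rw [hyk i hi, hc''i, ← hda_def, hda0, add_zero]
      have hβjy : β j ⬝ᵥ y = dc := by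
        rw [hyk j hj, hc''j, ← hdc_def, zero_add]
      have hy2 : y ∈ coneOf M B' := by
        refine ⟨c'', hc''0, ?_, hydef⟩
        intro l hl
        rw [hB'def] at hl
        simp only [Finset.mem_insert, not_or] at hl
        obtain ⟨hl1, hl2, hl3⟩ := hl
        simp only [hcdd]
        rw [if_neg hl1, if_neg hl3]
      have hy1 : y ∈ coneOf M (B.erase i) := by
        refine ⟨fun l => if l ∈ B then β l ⬝ᵥ y else 0, ?_, ?_, ?_⟩
        · intro l; dsimp only
          split
          · rename_i hlB
            by_cases hli : l = i
            · subst hli; rw [hβiy]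
            · by_cases hlj : l = j
              · subst hlj; rw [hβjy]; exact hdc0.le
              · have hlT : l ∈ T := by
                  rw [hT]
                  exact Finset.mem_erase.2 ⟨hlj, Finset.mem_erase.2 ⟨hli, hlB⟩⟩
                rw [hyk l hlB]
                have hcl : c'' l = max 0 (-(β l ⬝ᵥ (Amat M)ᵀ (bar i))) := by
                  simp only [hcdd]
                  rw [if_neg fun h => hbi (by rw [← h]; exact hlB), if_pos hlT]
                rw [hcl]
                have := le_max_right 0 (-(β l ⬝ᵥ (Amat M)ᵀ (bar i)))
                linarith
          · exact le_refl 0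
        · intro l hl; dsimp only
          split
          · rename_i hlB
            have hli : l = i := by
              by_contra hli
              exact hl (Finset.mem_erase.2 ⟨hli, hlB⟩)
            subst hli
            exact hβiy
          · rfl
        · have hgoal : (Amat M).mulVec (fun l => if l ∈ B then β l ⬝ᵥ y else 0) = y := by
            rw [_root_.mulVec_eq_sum]
            have hvan : ∀ l ∈ (Finset.univ : Finset (Fin n ⊕ Fin n)), l ∉ B →
                (if l ∈ B then β l ⬝ᵥ y else 0) • (Amat M)ᵀ l = 0 := by
              intro l _ hl
              rw [if_neg hl, zero_smul]
            rw [← Finset.sum_subset (Finset.subset_univ B) hvan]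
            have hre : ∑ l ∈ B, (if l ∈ B then β l ⬝ᵥ y else 0) • (Amat M)ᵀ l =
                ∑ l ∈ B, (β l ⬝ᵥ y) • (Amat M)ᵀ l :=
              Finset.sum_congr rfl fun l hl => by rw [if_pos hl]
            rw [hre, hexp y]
          exact hgoal.symm
      exact ⟨y, ⟨hy1, hy2⟩, by rw [hβjy]; exact ne_of_gt hdc0⟩
  rw [key1, key2, hda_def, hdc_def]
  constructor <;> rintro ⟨h1, h2⟩ <;> exact ⟨by linarith, by linarith⟩
end

section
/- Let M be sufficient and S = {Qθ + q : θ ∈ ℝ^d}. Set ε̂ = (ε, ε², …, εⁿ)ᵀ and S^ε = S + ε̂. Then there exists δ > 0 such that for every ε ∈ (0,δ), S^ε lies in general position with respect to the complementary cones of M: for every complementary basis B, S^ε ∩ 𝒞(B) ≠ ∅ implies S^ε ∩ int 𝒞(B) ≠ ∅. -/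
open Matrix

/-- The lexicographic perturbation vector `(ε, ε², …, εⁿ)`. -/
def epsVec {n : ℕ} (ε : ℝ) : Fin n → ℝ := fun i => ε ^ ((i : ℕ) + 1)

open Polynomial

-- mulVec as sum of columns
lemma mulVec_eq_sum_cols {n : ℕ} {m : Type*} [Fintype m] (A : Matrix (Fin n) m ℝ)
    (c : m → ℝ) : A.mulVec c = ∑ j, c j • Aᵀ j := by
  funext i
  simp [Matrix.mulVec, dotProduct, Finset.sum_apply, Matrix.transpose_apply, mul_comm]

lemma convex_coneOf {n : ℕ} (M : Matrix (Fin n) (Fin n) ℝ) (J : Finset (Fin n ⊕ Fin n)) :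
    Convex ℝ (coneOf M J) := by
  rintro y ⟨c, hc0, hcJ, rfl⟩ y' ⟨c', hc0', hcJ', rfl⟩ a b ha hb hab
  refine ⟨a • c + b • c', fun j => add_nonneg (mul_nonneg ha (hc0 j)) (mul_nonneg hb (hc0' j)), fun j hj => by simp [hcJ j hj, hcJ' j hj], ?_⟩
  simp [Matrix.mulVec_add, Matrix.mulVec_smul]

lemma smul_mem_coneOf {n : ℕ} {M : Matrix (Fin n) (Fin n) ℝ} {J : Finset (Fin n ⊕ Fin n)}
    {y : Fin n → ℝ} (hy : y ∈ coneOf M J) {l : ℝ} (hl : 0 ≤ l) : l • y ∈ coneOf M J := by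
  obtain ⟨c, hc0, hcJ, rfl⟩ := hy
  exact ⟨l • c, fun j => mul_nonneg hl (hc0 j), fun j hj => by simp [hcJ j hj],
    by simp [Matrix.mulVec_smul]⟩

lemma zero_mem_coneOf {n : ℕ} (M : Matrix (Fin n) (Fin n) ℝ) (J : Finset (Fin n ⊕ Fin n)) :
    (0 : Fin n → ℝ) ∈ coneOf M J :=
  ⟨0, fun j => le_refl 0, fun j _ => rfl, by simp [Matrix.mulVec_zero]⟩

lemma interior_coneOf_nonempty {n : ℕ} {M : Matrix (Fin n) (Fin n) ℝ}
    {B : Finset (Fin n ⊕ Fin n)} (hB : IsBasis M B) :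
    (interior (coneOf M B)).Nonempty := by
  obtain ⟨hcard, hli⟩ := hB
  by_cases hn : n = 0
  · subst hn
    refine ⟨0, ?_⟩
    have : coneOf M B = Set.univ := by
      ext y
      simp only [Set.mem_univ, iff_true]
      exact ⟨0, fun j => le_refl 0, fun j _ => rfl, by funext i; exact absurd i.2 (by omega)⟩
    rw [this, interior_univ]; trivial
  have hne : Nonempty ↥B := (Finset.card_pos.mp (by omega)).to_subtype
  have hcard' : Fintype.card ↥B = Module.finrank ℝ (Fin n → ℝ) := by
    rw [Fintype.card_coe, hcard, Module.finrank_fin_fun]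
  let b : Module.Basis ↥B ℝ (Fin n → ℝ) := basisOfLinearIndependentOfCardEqFinrank hli hcard'
  have hb : ∀ j : ↥B, b j = (Amat M)ᵀ (j : Fin n ⊕ Fin n) := fun j => by
    rw [coe_basisOfLinearIndependentOfCardEqFinrank]
  let e : (Fin n → ℝ) →ₗ[ℝ] (↥B → ℝ) := b.equivFun.toLinearMap
  have he : Continuous e := LinearMap.continuous_of_finiteDimensional e
  let U : Set (↥B → ℝ) := Set.univ.pi fun _ => Set.Ioi (0 : ℝ)
  have hU : IsOpen U := isOpen_set_pi Set.finite_univ (fun _ _ => isOpen_Ioi)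
  have hV : IsOpen (e ⁻¹' U) := hU.preimage he
  have hVsub : e ⁻¹' U ⊆ coneOf M B := by
    intro y hy
    refine ⟨fun j => if h : j ∈ B then b.equivFun y ⟨j, h⟩ else 0, ?_, ?_, ?_⟩
    · intro j
      by_cases h : j ∈ B
      · simp only [dif_pos h]
        exact le_of_lt (hy ⟨j, h⟩ (Set.mem_univ _))
      · simp [dif_neg h]
    · intro j hj; simp [dif_neg hj]
    · rw [mulVec_eq_sum_cols,
        ← Finset.sum_subset (Finset.subset_univ B)
          (fun j _ hj => by simp [dif_neg hj]),
        ← Finset.sum_attach B]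
      calc y = ∑ j : ↥B, b.equivFun y j • b j := (b.sum_equivFun y).symm
        _ = _ := by
            rw [Finset.univ_eq_attach]
            refine Finset.sum_congr rfl fun j _ => ?_
            rw [hb j, dif_pos j.2]
  have hmem : b.equivFun.symm (fun _ => 1) ∈ e ⁻¹' U := by
    simp only [Set.mem_preimage, U, Set.mem_pi]
    intro j _
    show (b.equivFun (b.equivFun.symm fun _ => 1)) j ∈ Set.Ioi (0:ℝ)
    rw [LinearEquiv.apply_symm_apply]
    exact Set.mem_Ioi.mpr zero_lt_one
  exact ⟨_, interior_maximal hVsub hV hmem⟩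

lemma pi_eq_sum_single {n : ℕ} (x : Fin n → ℝ) :
    x = ∑ i : Fin n, x i • (Pi.single i (1 : ℝ) : Fin n → ℝ) := by
  funext k
  simp [Finset.sum_apply, Pi.single_apply]

lemma clm_apply_eq_sum {n : ℕ} (f : (Fin n → ℝ) →L[ℝ] ℝ) (x : Fin n → ℝ) :
    f x = ∑ i : Fin n, x i * f (Pi.single i 1) := by
  conv_lhs => rw [pi_eq_sum_single x]
  rw [map_sum]
  exact Finset.sum_congr rfl fun i _ => by rw [_root_.map_smul, smul_eq_mul]

noncomputable def gpoly {n : ℕ} (q : Fin n → ℝ) (f : (Fin n → ℝ) →L[ℝ] ℝ) : Polynomial ℝ :=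
  C (f q) + ∑ i : Fin n, C (f (Pi.single i 1)) * X ^ ((i : ℕ) + 1)

lemma gpoly_eval {n : ℕ} (q : Fin n → ℝ) (f : (Fin n → ℝ) →L[ℝ] ℝ) (ε : ℝ) :
    (gpoly q f).eval ε = f q + f (epsVec ε) := by
  have h : f (epsVec ε) = ∑ i : Fin n, ε ^ ((i : ℕ) + 1) * f (Pi.single i 1) := by
    rw [clm_apply_eq_sum f (epsVec ε)]
    exact Finset.sum_congr rfl fun i _ => rfl
  rw [gpoly, eval_add, eval_C, eval_finset_sum, h]
  congr 1
  exact Finset.sum_congr rfl fun i _ => by rw [eval_mul, eval_C, eval_pow, eval_X, mul_comm]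

lemma gpoly_ne_zero {n : ℕ} (q : Fin n → ℝ) (f : (Fin n → ℝ) →L[ℝ] ℝ) (hf : f ≠ 0) :
    gpoly q f ≠ 0 := by
  have hex : ∃ i : Fin n, f (Pi.single i 1) ≠ 0 := by
    by_contra h
    push_neg at h
    apply hf
    ext x
    rw [clm_apply_eq_sum]
    simp [h]
  obtain ⟨i, hi⟩ := hex
  intro hzero
  have hcoeff : (gpoly q f).coeff ((i : ℕ) + 1) = f (Pi.single i 1) := by
    rw [gpoly, coeff_add, coeff_C, if_neg (by omega), Polynomial.finset_sum_coeff]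
    rw [zero_add]
    rw [Finset.sum_eq_single i]
    · simp [coeff_C_mul, coeff_X_pow]
    · intro j _ hj
      rw [coeff_C_mul, coeff_X_pow, if_neg, mul_zero]
      intro h
      exact hj (Fin.val_injective (by omega))
    · simp
  rw [hzero] at hcoeff
  simp at hcoeff
  exact hi hcoeff.symm

def Good {n d : ℕ} (M : Matrix (Fin n) (Fin n) ℝ) (Q : Matrix (Fin n) (Fin d) ℝ)
    (B S : Finset (Fin n ⊕ Fin n)) (f : (Fin n → ℝ) →L[ℝ] ℝ) : Prop :=
  f ≠ 0 ∧ (∀ j ∈ B, f ((Amat M)ᵀ j) ≤ 0) ∧ (∀ j ∈ B, j ∉ S → f ((Amat M)ᵀ j) = 0) ∧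
    ∀ θ : Fin d → ℝ, f (Q.mulVec θ) = 0

lemma convex_affSet {n d : ℕ} (Q : Matrix (Fin n) (Fin d) ℝ) (q v : Fin n → ℝ) :
    Convex ℝ {y | ∃ θ : Fin d → ℝ, y = q + Q.mulVec θ + v} := by
  rintro y ⟨θ₁, rfl⟩ y' ⟨θ₂, rfl⟩ a b ha hb hab
  refine ⟨a • θ₁ + b • θ₂, ?_⟩
  rw [Matrix.mulVec_add, Matrix.mulVec_smul, Matrix.mulVec_smul]
  match_scalars <;> simp <;> ring_nf <;> nlinarith [hab]

lemma sep_lemma {n d : ℕ} (M : Matrix (Fin n) (Fin n) ℝ) (Q : Matrix (Fin n) (Fin d) ℝ)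
    (q : Fin n → ℝ) {B : Finset (Fin n ⊕ Fin n)} (hB : IsBasis M B) (v : Fin n → ℝ)
    (hne : ({y | ∃ θ : Fin d → ℝ, y = q + Q.mulVec θ + v} ∩ coneOf M B).Nonempty)
    (hint : ({y | ∃ θ : Fin d → ℝ, y = q + Q.mulVec θ + v} ∩ interior (coneOf M B)) = ∅) :
    ∃ S : Finset (Fin n ⊕ Fin n), (∃ f, Good M Q B S f) ∧
      ∀ g, Good M Q B S g → g q + g v = 0 := by
  classical
  set F := {y | ∃ θ : Fin d → ℝ, y = q + Q.mulVec θ + v} with hF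
  set K := coneOf M B with hK
  have hdisj : Disjoint (interior K) F := by
    rw [Set.disjoint_iff_inter_eq_empty, Set.inter_comm]
    exact hint
  obtain ⟨f, u, hfu1, hfu2⟩ :=
    geometric_hahn_banach_open ((convex_coneOf M B).interior) isOpen_interior
      (convex_affSet Q q v) hdisj
  obtain ⟨y₀, hy₀⟩ := interior_coneOf_nonempty hB
  -- f ≤ u on K
  have hfKu : ∀ y ∈ K, f y ≤ u := by
    intro y hy
    by_contra hlt
    push_neg at hlt
    have hy₀u : f y₀ < u := hfu1 y₀ hy₀
    have hD : 0 < f y - f y₀ := by linarith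
    set t : ℝ := min 1 ((f y - u) / (2 * (f y - f y₀))) with ht
    have ht0 : 0 < t := lt_min one_pos (div_pos (by linarith) (by linarith))
    have ht1 : t ≤ 1 := min_le_left _ _
    have hmem : y + t • (y₀ - y) ∈ interior K :=
      (convex_coneOf M B).add_smul_sub_mem_interior hy hy₀ ⟨ht0, ht1⟩
    have := hfu1 _ hmem
    rw [map_add, _root_.map_smul, map_sub, smul_eq_mul] at this
    have htle : t ≤ (f y - u) / (2 * (f y - f y₀)) := min_le_right _ _
    have h2 : t * (f y - f y₀) ≤ (f y - u) / 2 := by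
      calc t * (f y - f y₀) ≤ (f y - u) / (2 * (f y - f y₀)) * (f y - f y₀) :=
            mul_le_mul_of_nonneg_right htle (le_of_lt hD)
        _ = (f y - u) / 2 := by field_simp
    nlinarith
  have hu0 : 0 ≤ u := by
    have := hfKu 0 (zero_mem_coneOf M B)
    rwa [map_zero] at this
  -- f ≤ 0 on K
  have hfK0 : ∀ y ∈ K, f y ≤ 0 := by
    intro y hy
    by_contra hpos
    push_neg at hpos
    have hl : (0:ℝ) ≤ (u + 1) / f y := by positivity
    have := hfKu _ (smul_mem_coneOf hy hl)
    rw [_root_.map_smul, smul_eq_mul, div_mul_cancel₀ _ (ne_of_gt hpos)] at this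
    linarith
  -- f kills Q directions
  have hQ0 : ∀ θ : Fin d → ℝ, f (Q.mulVec θ) = 0 := by
    intro θ
    by_contra hb
    have hall : ∀ t : ℝ, u ≤ f (q + v) + t * f (Q.mulVec θ) := by
      intro t
      have := hfu2 (q + Q.mulVec (t • θ) + v) ⟨t • θ, rfl⟩
      rw [show q + Q.mulVec (t • θ) + v = (q + v) + t • Q.mulVec θ by
        rw [Matrix.mulVec_smul]; abel] at this
      rwa [map_add, _root_.map_smul, smul_eq_mul] at this
    have := hall ((u - f (q + v) - 1) / f (Q.mulVec θ))
    rw [div_mul_cancel₀ _ hb] at this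
    linarith
  -- the common point
  obtain ⟨x, ⟨θ₀, hxF⟩, hxK⟩ := hne
  obtain ⟨c, hc0, hcB, hcx⟩ := hxK
  have hfx : f x = 0 := by
    have h1 : f x ≤ 0 := hfK0 x ⟨c, hc0, hcB, hcx⟩
    have h2 : u ≤ f x := hfu2 x ⟨θ₀, hxF⟩
    linarith
  -- columns in the cone
  have hcolK : ∀ j ∈ B, (Amat M)ᵀ j ∈ K := by
    intro j hj
    refine ⟨Pi.single j 1, ?_, ?_, ?_⟩
    · intro k
      rcases eq_or_ne k j with rfl | hkj
      · simp
      · simp [Pi.single_apply, if_neg hkj]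
    · intro k hk
      have : k ≠ j := fun h => hk (h ▸ hj)
      simp [Pi.single_apply, if_neg this]
    · rw [mulVec_eq_sum_cols]
      rw [Finset.sum_eq_single j]
      · simp
      · intro k _ hkj
        simp [Pi.single_apply, if_neg hkj]
      · simp
  have hfcol : ∀ j ∈ B, f ((Amat M)ᵀ j) ≤ 0 := fun j hj => hfK0 _ (hcolK j hj)
  -- f ≠ 0
  have hfne : f ≠ 0 := by
    intro h
    subst h
    have h1 := hfu1 y₀ hy₀
    have h2 := hfu2 x ⟨θ₀, hxF⟩
    simp at h1 h2
    linarith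
  -- terms vanish
  have hsum : ∑ j : Fin n ⊕ Fin n, c j * f ((Amat M)ᵀ j) = 0 := by
    have : f x = ∑ j : Fin n ⊕ Fin n, c j * f ((Amat M)ᵀ j) := by
      rw [hcx, mulVec_eq_sum_cols, map_sum]
      exact Finset.sum_congr rfl fun j _ => by rw [_root_.map_smul, smul_eq_mul]
    rw [← this, hfx]
  have hterm : ∀ j : Fin n ⊕ Fin n, c j * f ((Amat M)ᵀ j) = 0 := by
    have hnp : ∀ j ∈ Finset.univ, c j * f ((Amat M)ᵀ j) ≤ 0 := by
      intro j _
      by_cases hj : j ∈ B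
      · exact mul_nonpos_of_nonneg_of_nonpos (hc0 j) (hfcol j hj)
      · rw [hcB j hj, zero_mul]
    intro j
    exact (Finset.sum_eq_zero_iff_of_nonpos hnp).mp hsum j (Finset.mem_univ j)
  set S := B.filter (fun j => f ((Amat M)ᵀ j) ≠ 0) with hS
  have hcS : ∀ j ∈ S, c j = 0 := by
    intro j hj
    rw [hS, Finset.mem_filter] at hj
    have := hterm j
    rcases mul_eq_zero.mp this with h | h
    · exact h
    · exact absurd h hj.2
  refine ⟨S, ⟨f, hfne, hfcol, fun j hj hjS => ?_, hQ0⟩, ?_⟩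
  · by_contra h
    exact hjS (Finset.mem_filter.mpr ⟨hj, h⟩)
  · intro g hg
    obtain ⟨hgne, hgcol, hgS, hgQ⟩ := hg
    have hgx : g x = 0 := by
      have : g x = ∑ j : Fin n ⊕ Fin n, c j * g ((Amat M)ᵀ j) := by
        rw [hcx, mulVec_eq_sum_cols, map_sum]
        exact Finset.sum_congr rfl fun j _ => by rw [_root_.map_smul, smul_eq_mul]
      rw [this]
      apply Finset.sum_eq_zero
      intro j _
      by_cases hjB : j ∈ B
      · by_cases hjS : j ∈ S
        · rw [hcS j hjS, zero_mul]
        · rw [hgS j hjB hjS, mul_zero]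
      · rw [hcB j hjB, zero_mul]
    have : g x = g q + g v := by
      rw [hxF, map_add, map_add, hgQ θ₀, add_zero]
    rw [← this, hgx]

open scoped Classical in
noncomputable def GP {n d : ℕ} (M : Matrix (Fin n) (Fin n) ℝ) (Q : Matrix (Fin n) (Fin d) ℝ)
    (q : Fin n → ℝ) (BS : Finset (Fin n ⊕ Fin n) × Finset (Fin n ⊕ Fin n)) : Polynomial ℝ :=
  if h : ∃ f, Good M Q BS.1 BS.2 f then gpoly q h.choose else 1

theorem stmt_13 {n d : ℕ} (M : Matrix (Fin n) (Fin n) ℝ) (hM : Suff M)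
    (Q : Matrix (Fin n) (Fin d) ℝ) (q : Fin n → ℝ) :
    ∃ δ > (0 : ℝ), ∀ ε : ℝ, 0 < ε → ε < δ →
      ∀ B : Finset (Fin n ⊕ Fin n), IsComplBasis M B →
        ({y | ∃ θ : Fin d → ℝ, y = q + Q.mulVec θ + epsVec ε} ∩ coneOf M B).Nonempty →
        ({y | ∃ θ : Fin d → ℝ, y = q + Q.mulVec θ + epsVec ε} ∩
          interior (coneOf M B)).Nonempty := by
  classical
  have hGPne : ∀ BS : Finset (Fin n ⊕ Fin n) × Finset (Fin n ⊕ Fin n), GP M Q q BS ≠ 0 := by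
    intro BS
    by_cases h : ∃ f, Good M Q BS.1 BS.2 f
    · unfold GP
      rw [dif_pos h]
      exact gpoly_ne_zero q _ h.choose_spec.1
    · unfold GP
      rw [dif_neg h]
      exact one_ne_zero
  have hfin : (⋃ BS : Finset (Fin n ⊕ Fin n) × Finset (Fin n ⊕ Fin n),
      {x : ℝ | (GP M Q q BS).IsRoot x}).Finite :=
    Set.finite_iUnion fun BS => Polynomial.finite_setOf_isRoot (hGPne BS)
  set Z := hfin.toFinset with hZ
  set Zpos := Z.filter (fun x => 0 < x) with hZpos
  refine ⟨if h : Zpos.Nonempty then min 1 (Zpos.min' h) else 1, ?_, ?_⟩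
  · by_cases h : Zpos.Nonempty
    · rw [dif_pos h]
      refine lt_min one_pos ?_
      exact (Finset.mem_filter.mp (Zpos.min'_mem h)).2
    · rw [dif_neg h]
      exact one_pos
  intro ε hε0 hεδ B hBcompl hne
  by_contra hint
  rw [Set.not_nonempty_iff_eq_empty] at hint
  obtain ⟨S, hex, hall⟩ := sep_lemma M Q q hBcompl.1 (epsVec ε) hne hint
  have hroot : (GP M Q q (B, S)).IsRoot ε := by
    unfold GP
    rw [dif_pos hex, Polynomial.IsRoot, gpoly_eval]
    exact hall hex.choose hex.choose_spec
  have hZmem : ε ∈ Zpos := by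
    exact Finset.mem_filter.mpr ⟨hfin.mem_toFinset.mpr (Set.mem_iUnion.mpr ⟨(B, S), hroot⟩), hε0⟩
  have hne' : Zpos.Nonempty := ⟨ε, hZmem⟩
  rw [dif_pos hne'] at hεδ
  have h1 : Zpos.min' hne' ≤ ε := Zpos.min'_le ε hZmem
  have h2 : ε < Zpos.min' hne' := lt_of_lt_of_le hεδ (min_le_right _ _)
  linarith
end
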